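/- Let D ⊂ ℂⁿ be a bounded convex open set, X a connected complex manifold, and h : X → ℂⁿ a holomorphic map with h(X) ⊆ closure(D) and h(X) ∩ ∂D ≠ ∅. Then h(X) ⊆ ∂D, and for every x₀ ∈ X and every complex supporting hyperplane L at h(x₀), h(X) ⊆ L; hence h(X) ⊆ ⋂_{x ∈ X} Ch(h(x)). -/

import Mathlib

open scoped Manifold

/-- Rigidity lemma: if `f : X → ℂ` is holomorphic on a connected complex
manifold and its real part attains a global maximum at `x₀`, then `f` is
constant. -/
theorem mdiff_re_max_const {m : ℕ} {X : Type*} [TopologicalSpace X]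
    [ChartedSpace (EuclideanSpace ℂ (Fin m)) X]
    [IsManifold 𝓘(ℂ, EuclideanSpace ℂ (Fin m)) (⊤ : ℕ∞) X]
    [ConnectedSpace X]
    {f : X → ℂ}
    (hf : MDifferentiable 𝓘(ℂ, EuclideanSpace ℂ (Fin m)) 𝓘(ℂ, ℂ) f)
    {x₀ : X} (hmax : ∀ x, (f x).re ≤ (f x₀).re) :
    ∀ x, f x = f x₀ := by
  set g : X → ℂ := fun x => Complex.exp (f x) with hg
  have hgd : MDifferentiable 𝓘(ℂ, EuclideanSpace ℂ (Fin m)) 𝓘(ℂ, ℂ) g :=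
    fun x => (Complex.differentiable_exp.mdifferentiable _).comp x (hf x)
  have hnorm : ∀ x, ‖g x‖ = Real.exp (f x).re := fun x => Complex.norm_exp (f x)
  have hmaxg : IsMaxOn (norm ∘ g) Set.univ x₀ := by
    intro x _
    simp only [Function.comp_apply, Set.mem_setOf_eq, hnorm]
    exact Real.exp_le_exp.2 (hmax x)
  have hconst : Set.EqOn g (Function.const X (g x₀)) Set.univ :=
    MDifferentiableOn.eqOn_of_isPreconnected_of_isMaxOn_norm
      hgd.mdifferentiableOn isPreconnected_univ isOpen_univ (Set.mem_univ x₀) hmaxg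
  -- `exp ∘ f` constant ⇒ `f` takes values in the discrete set `f x₀ + 2πiℤ`
  have hkey : ∀ x, ∃ k : ℤ, f x = f x₀ + k * (2 * Real.pi * Complex.I) := by
    intro x
    have : Complex.exp (f x) = Complex.exp (f x₀) := hconst (Set.mem_univ x)
    rcases Complex.exp_eq_exp_iff_exists_int.1 this with ⟨k, hk⟩
    exact ⟨k, hk⟩
  have hcont : Continuous f := by
    have := hf.continuous
    exact this
  -- open-closed argument
  set S : Set X := {x | f x = f x₀} with hS
  have hSc : IsClosed S := isClosed_eq hcont continuous_const
  have hSo : IsOpen S := by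
    rw [isOpen_iff_mem_nhds]
    intro x hx
    have hx' : f x = f x₀ := hx
    have hnb : ∀ᶠ y in nhds x, ‖f y - f x‖ < 1 := by
      have hc : Continuous fun y => ‖f y - f x‖ := (hcont.sub continuous_const).norm
      have h0 : ‖f x - f x‖ < 1 := by simp
      exact (hc.tendsto x).eventually_lt_const h0
    filter_upwards [hnb] with y hy
    rcases hkey y with ⟨k, hk⟩
    rcases hkey x with ⟨k', hk'⟩
    have hdiff : f y - f x = (k - k' : ℤ) * (2 * Real.pi * Complex.I) := by
      rw [hk, hk']; push_cast; ring
    by_cases hk0 : (k - k' : ℤ) = 0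
    · have : f y = f x := by
        have := hdiff
        rw [hk0] at this
        simpa [sub_eq_zero] using this
      show f y = f x₀
      rw [this, hx']
    · exfalso
      have habs : ‖f y - f x‖ = |((k - k' : ℤ) : ℝ)| * (2 * Real.pi) := by
        rw [hdiff, norm_mul]
        congr 1
        · exact_mod_cast Complex.norm_intCast (k - k')
        · simp [norm_mul, Complex.norm_real, abs_of_pos Real.pi_pos]
      have h1 : (1 : ℝ) ≤ |((k - k' : ℤ) : ℝ)| := by
        have : (1 : ℤ) ≤ |k - k'| := Int.one_le_abs hk0
        calc (1:ℝ) ≤ ((|k - k'| : ℤ) : ℝ) := by exact_mod_cast this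
          _ = |((k - k' : ℤ) : ℝ)| := by push_cast; ring
      have h2 : (2 : ℝ) * Real.pi ≤ ‖f y - f x‖ := by
        rw [habs]
        nlinarith [Real.pi_pos]
      nlinarith [Real.pi_gt_three]
  have : S = Set.univ := by
    rcases isClopen_iff.1 ⟨hSc, hSo⟩ with h | h
    · exfalso; have : x₀ ∈ S := rfl; rw [h] at this; exact this
    · exact h
  intro x
  have : x ∈ S := this ▸ Set.mem_univ x
  exact this

/-- Let `D ⊆ ℂⁿ` be a bounded convex open set, `X` a connected complex
manifold and `h : X → ℂⁿ` holomorphic with `h(X) ⊆ closure D` and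
`h(X) ∩ ∂D ≠ ∅`.  Then `h(X) ⊆ ∂D`; moreover `h(X)` is contained in every
complex supporting hyperplane at any point `h(x₀)`, and hence
`h(X) ⊆ ⋂_{x ∈ X} Ch(h(x))`. -/
theorem holomorphic_image_in_frontier {n m : ℕ} {D : Set (Fin n → ℂ)}
    (hconv : Convex ℝ D) (hopen : IsOpen D) (hbd : Bornology.IsBounded D)
    {X : Type*} [TopologicalSpace X]
    [ChartedSpace (EuclideanSpace ℂ (Fin m)) X]
    [IsManifold 𝓘(ℂ, EuclideanSpace ℂ (Fin m)) (⊤ : ℕ∞) X]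
    [ConnectedSpace X]
    {h : X → (Fin n → ℂ)}
    (hhol : MDifferentiable 𝓘(ℂ, EuclideanSpace ℂ (Fin m))
      𝓘(ℂ, Fin n → ℂ) h)
    (hcl : ∀ p : X, h p ∈ closure D)
    (hfront : ∃ p : X, h p ∈ frontier D) :
    (∀ p : X, h p ∈ frontier D) ∧
    (∀ x₀ : X, ∀ σ : (Fin n → ℂ) →ₗ[ℂ] ℂ,
      (∀ z ∈ D, (σ z).re < (σ (h x₀)).re) →
      ∀ p : X, h p ∈ {y : Fin n → ℂ | y - h x₀ ∈ LinearMap.ker σ}) ∧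
    (∀ p : X, h p ∈ ⋂ x : X, (closure D ∩
      ⋂ σ ∈ {σ : (Fin n → ℂ) →ₗ[ℂ] ℂ | ∀ z ∈ D, (σ z).re < (σ (h x)).re},
        {y : Fin n → ℂ | y - h x ∈ LinearMap.ker σ})) := by
  -- The key rigidity statement: for any supporting functional at a point of
  -- the image, `σ ∘ h` is constant.
  have key : ∀ (x₀ : X) (σ : (Fin n → ℂ) →ₗ[ℂ] ℂ),
      (∀ z ∈ D, (σ z).re < (σ (h x₀)).re) → ∀ p : X, σ (h p) = σ (h x₀) := by
    intro x₀ σ hσ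
    set f : X → ℂ := fun x => σ (h x) with hf
    have hσc : Continuous σ := LinearMap.continuous_of_finiteDimensional σ
    have hfd : MDifferentiable 𝓘(ℂ, EuclideanSpace ℂ (Fin m)) 𝓘(ℂ, ℂ) f := by
      have hσd : Differentiable ℂ (σ : (Fin n → ℂ) → ℂ) :=
        (LinearMap.toContinuousLinearMap σ).differentiable
      exact fun x => (hσd.mdifferentiable _).comp x (hhol x)
    have hmax : ∀ x, (f x).re ≤ (f x₀).re := by
      intro x
      have hsub : closure D ⊆ {z | (σ z).re ≤ (σ (h x₀)).re} := by
        apply closure_minimal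
        · exact fun z hz => le_of_lt (hσ z hz)
        · exact IsClosed.preimage (Complex.continuous_re.comp hσc) isClosed_Iic
      exact hsub (hcl x)
    exact mdiff_re_max_const hfd hmax
  -- Part 1: the image lies in the frontier.
  have part1 : ∀ p : X, h p ∈ frontier D := by
    rcases hfront with ⟨p₁, hp₁⟩
    have hp₁D : h p₁ ∉ D := by
      have := hopen.frontier_eq ▸ hp₁
      exact this.2
    -- separating functional
    obtain ⟨g, hg⟩ := geometric_hahn_banach_open_point hconv hopen hp₁D
    set σ : (Fin n → ℂ) →ₗ[ℂ] ℂ := LinearMap.extendTo𝕜' (𝕜 := ℂ) g.toLinearMap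
    have hre : ∀ z, (σ z).re = g z := fun z =>
      LinearMap.extendTo𝕜'_apply_re (𝕜 := ℂ) g.toLinearMap z
    have hσsupp : ∀ z ∈ D, (σ z).re < (σ (h p₁)).re := by
      intro z hz; rw [hre, hre]; exact hg z hz
    intro p
    have hconstσ := key p₁ σ hσsupp p
    constructor
    · exact hcl p
    · rw [hopen.interior_eq]
      intro hpD
      have := hσsupp (h p) hpD
      rw [hconstσ] at this
      exact lt_irrefl _ this
  refine ⟨part1, ?_, ?_⟩
  · intro x₀ σ hσ p
    have := key x₀ σ hσ p
    simp only [Set.mem_setOf_eq, LinearMap.mem_ker, map_sub, this, sub_self]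
  · intro p
    refine Set.mem_iInter.2 fun x => ⟨hcl p, ?_⟩
    refine Set.mem_iInter₂.2 fun σ hσ => ?_
    have := key x σ hσ p
    simp only [Set.mem_setOf_eq, LinearMap.mem_ker, map_sub, this, sub_self]
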